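/- Fix d ≥ 1 and D = {0,…,d}. Let A ∈ ℝ^{4×3} have the sign pattern: a_{11}, a_{12}, a_{21}, a_{33} > 0; a_{22}, a_{31}, a_{41}, a_{43} < 0; a_{13} = a_{23} = a_{32} = a_{42} = 0. Then for every b ∈ ℝ^4, the solution graph G(A,b) on {x ∈ D^3 : Ax ≥ b}, with edges between vectors at Hamming distance 1, is connected. -/

import Mathlib

open Matrix Finset
open scoped Classical

/-- `A` has a forbidden pattern: there are `lam ≥ 1` rows and columns, with
orderings (injective enumerations) `r`, `c`, such that in column `c l` all rows
of the pattern other than `r l`, `r (l+1)` vanish (cyclically), and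
`A (r l) (c l) * A (r (l+1)) (c l) < 0` for every `l`. -/
def HasFP {m n : ℕ} (A : Matrix (Fin m) (Fin n) ℝ) : Prop :=
  ∃ lam : ℕ, ∃ r : Fin (lam + 1) → Fin m, ∃ c : Fin (lam + 1) → Fin n,
    Function.Injective r ∧ Function.Injective c ∧
    (∀ l k : Fin (lam + 1), k ≠ l → k ≠ l + 1 → A (r k) (c l) = 0) ∧
    (∀ l : Fin (lam + 1), A (r l) (c l) * A (r (l + 1)) (c l) < 0)

/-- `A`, restricted to the set `S` of remaining columns, can be eliminated at column `j`. -/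
def CanElim {m n : ℕ} (A : Matrix (Fin m) (Fin n) ℝ) (S : Finset (Fin n)) (j : Fin n) : Prop :=
  (∀ i, 0 < A i j → ∀ j' ∈ S, j' ≠ j → A i j' = 0) ∨
  (∀ i, A i j < 0 → ∀ j' ∈ S, j' ≠ j → A i j' = 0)

/-- `A` has an elimination ordering. -/
def HasEO {m n : ℕ} (A : Matrix (Fin m) (Fin n) ℝ) : Prop :=
  ∃ e : Fin n ≃ Fin n, ∀ t : Fin n,
    CanElim A (Finset.univ.filter fun c => ∀ s : Fin n, s < t → e s ≠ c) (e t)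

/-- `x ∈ {0,…,d}ⁿ` is a feasible solution of the integer linear system `A x ≥ b`. -/
def Feas {m n : ℕ} (d : ℕ) (A : Matrix (Fin m) (Fin n) ℝ) (b : Fin m → ℝ)
    (x : Fin n → ℕ) : Prop :=
  (∀ j, x j ≤ d) ∧ ∀ i, b i ≤ ∑ j, A i j * (x j : ℝ)

/-- Adjacency in the solution graph `G(A,b)`: both endpoints are feasible and
their Hamming distance is `1`. -/
def SGAdj {m n : ℕ} (d : ℕ) (A : Matrix (Fin m) (Fin n) ℝ) (b : Fin m → ℝ)
    (x y : Fin n → ℕ) : Prop :=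
  Feas d A b x ∧ Feas d A b y ∧ hammingDist x y = 1

/-- The solution graph `G(A,b)` is connected. -/
def SGConn {m n : ℕ} (d : ℕ) (A : Matrix (Fin m) (Fin n) ℝ) (b : Fin m → ℝ) : Prop :=
  ∀ x y : Fin n → ℕ, Feas d A b x → Feas d A b y →
    Relation.ReflTransGen (SGAdj d A b) x y

/-- `A` is universally connected. -/
def UnivConn {m n : ℕ} (d : ℕ) (A : Matrix (Fin m) (Fin n) ℝ) : Prop :=
  ∀ b : Fin m → ℝ, SGConn d A b

lemma sgadj_symm {m n d} {A : Matrix (Fin m) (Fin n) ℝ} {b : Fin m → ℝ} :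
    Symmetric (SGAdj d A b) := by
  rintro x y ⟨hx, hy, h⟩
  exact ⟨hy, hx, by rwa [hammingDist_comm]⟩

lemma step {m n : ℕ} {d : ℕ} {A : Matrix (Fin m) (Fin n) ℝ} {b : Fin m → ℝ}
    (x y : Fin n → ℕ) (hx : Feas d A b x) (hy : Feas d A b y) (j : Fin n)
    (h : ∀ k, k ≠ j → x k = y k) :
    Relation.ReflTransGen (SGAdj d A b) x y := by
  by_cases hxy : x = y
  · exact hxy ▸ Relation.ReflTransGen.refl
  · apply Relation.ReflTransGen.single
    refine ⟨hx, hy, ?_⟩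
    have hj : x j ≠ y j := by
      intro hh
      apply hxy
      funext k
      by_cases hk : k = j
      · rw [hk]; exact hh
      · exact h k hk
    have : ({i | x i ≠ y i} : Finset (Fin n)) = {j} := by
      ext k
      simp only [Finset.mem_filter, Finset.mem_univ, true_and, Finset.mem_singleton,
        Finset.mem_insert]
      constructor
      · intro hk
        by_contra hkj
        exact hk (h k hkj)
      · intro hk; rw [hk]; exact hj
    unfold hammingDist
    rw [this, Finset.card_singleton]

lemma half {d : ℕ} (hd : 1 ≤ d) (A : Matrix (Fin 4) (Fin 3) ℝ)
    (h11 : 0 < A 0 0) (h12 : 0 < A 0 1) (h13 : A 0 2 = 0)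
    (h21 : 0 < A 1 0) (h22 : A 1 1 < 0) (h23 : A 1 2 = 0)
    (h31 : A 2 0 < 0) (h32 : A 2 1 = 0) (h33 : 0 < A 2 2)
    (h41 : A 3 0 < 0) (h42 : A 3 1 = 0) (h43 : A 3 2 < 0)
    (b : Fin 4 → ℝ) (s t : Fin 3 → ℕ) (hs : Feas d A b s) (ht : Feas d A b t)
    (h01 : t 0 ≤ s 0) :
    Relation.ReflTransGen (SGAdj d A b) s t := by
  have hcast : ((t 0 : ℝ)) ≤ (s 0 : ℝ) := Nat.cast_le.2 h01
  have hs0 := hs.2 0; have hs1 := hs.2 1; have hs2 := hs.2 2; have hs3 := hs.2 3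
  have ht0 := ht.2 0; have ht1 := ht.2 1; have ht2 := ht.2 2; have ht3 := ht.2 3
  rw [Fin.sum_univ_three] at hs0 hs1 hs2 hs3 ht0 ht1 ht2 ht3
  set u : Fin 3 → ℕ := Function.update s 1 (t 1) with hu
  set v : Fin 3 → ℕ := Function.update u 0 (t 0) with hv
  have hu0 : u 0 = s 0 := Function.update_of_ne (by decide) _ _
  have hu1 : u 1 = t 1 := Function.update_self _ _ _
  have hu2 : u 2 = s 2 := Function.update_of_ne (by decide) _ _
  have hv0 : v 0 = t 0 := Function.update_self _ _ _
  have hv1 : v 1 = t 1 := by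
    rw [hv, Function.update_of_ne (by decide), hu1]
  have hv2 : v 2 = s 2 := by
    rw [hv, Function.update_of_ne (by decide), hu2]
  have hufeas : Feas d A b u := by
    constructor
    · intro j
      match j with
      | 0 => rw [hu0]; exact hs.1 0
      | 1 => rw [hu1]; exact ht.1 1
      | 2 => rw [hu2]; exact hs.1 2
    · intro i
      rw [Fin.sum_univ_three, hu0, hu1, hu2]
      match i with
      | 0 =>
        rw [h13, zero_mul] at ht0 ⊢
        linarith [mul_le_mul_of_nonneg_left hcast h11.le]
      | 1 =>
        rw [h23, zero_mul] at ht1 ⊢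
        linarith [mul_le_mul_of_nonneg_left hcast h21.le]
      | 2 =>
        rw [h32, zero_mul] at hs2 ⊢
        linarith
      | 3 =>
        rw [h42, zero_mul] at hs3 ⊢
        linarith
  have hvfeas : Feas d A b v := by
    constructor
    · intro j
      match j with
      | 0 => rw [hv0]; exact ht.1 0
      | 1 => rw [hv1]; exact ht.1 1
      | 2 => rw [hv2]; exact hs.1 2
    · intro i
      rw [Fin.sum_univ_three, hv0, hv1, hv2]
      match i with
      | 0 =>
        rw [h13, zero_mul] at ht0 ⊢
        linarith
      | 1 =>
        rw [h23, zero_mul] at ht1 ⊢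
        linarith
      | 2 =>
        rw [h32, zero_mul] at hs2 ⊢
        linarith [mul_le_mul_of_nonpos_left hcast h31.le]
      | 3 =>
        rw [h42, zero_mul] at hs3 ⊢
        linarith [mul_le_mul_of_nonpos_left hcast h41.le]
  have p1 : Relation.ReflTransGen (SGAdj d A b) s u := by
    apply step s u hs hufeas 1
    intro k hk
    match k with
    | 0 => exact hu0.symm
    | 1 => exact absurd rfl hk
    | 2 => exact hu2.symm
  have p2 : Relation.ReflTransGen (SGAdj d A b) u v := by
    apply step u v hufeas hvfeas 0
    intro k hk
    match k with
    | 0 => exact absurd rfl hk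
    | 1 => rw [hu1, hv1]
    | 2 => rw [hu2, hv2]
  have p3 : Relation.ReflTransGen (SGAdj d A b) v t := by
    apply step v t hvfeas ht 2
    intro k hk
    match k with
    | 0 => exact hv0
    | 1 => exact hv1
    | 2 => exact absurd rfl hk
  exact (p1.trans p2).trans p3

theorem stmt9 (d : ℕ) (hd : 1 ≤ d) (A : Matrix (Fin 4) (Fin 3) ℝ)
    (h11 : 0 < A 0 0) (h12 : 0 < A 0 1) (h13 : A 0 2 = 0)
    (h21 : 0 < A 1 0) (h22 : A 1 1 < 0) (h23 : A 1 2 = 0)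
    (h31 : A 2 0 < 0) (h32 : A 2 1 = 0) (h33 : 0 < A 2 2)
    (h41 : A 3 0 < 0) (h42 : A 3 1 = 0) (h43 : A 3 2 < 0) :
    ∀ b : Fin 4 → ℝ, SGConn d A b := by
  intro b s t hs ht
  rcases le_total (t 0) (s 0) with h | h
  · exact half hd A h11 h12 h13 h21 h22 h23 h31 h32 h33 h41 h42 h43 b s t hs ht h
  · haveI : Std.Symm (SGAdj d A b) := ⟨fun _ _ hab => sgadj_symm hab⟩
    exact (Relation.ReflTransGen.stdSymm).symm _ _
      (half hd A h11 h12 h13 h21 h22 h23 h31 h32 h33 h41 h42 h43 b t s ht hs h)
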